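/- Let d ≥ 1, Σ positive definite, θ₀ ∈ ℝ^d, σ > 0, ε > 0, ξ ≥ 0. Suppose there is a subset S ⊆ {1,…,d} such that Σ_{ij} = 0 whenever exactly one of i, j lies in S (i.e. Σ is block diagonal with respect to S and its complement), and suppose θ₀ is supported on S (θ₀ⱼ = 0 for all j ∉ S). Then every global minimizer θ* of the surrogate population adversarial risk R_{L,ξ}(·,ε) is also supported on S: θ*ⱼ = 0 for all j ∉ S. -/

import Mathlib

open MeasureTheory ProbabilityTheory Real Filter Matrix
open scoped RealInnerProductSpace BigOperators NNReal ENNReal Topology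

noncomputable section

/-- The Σ-quadratic form `aᵀ Σ a`. -/
def quadForm {d : ℕ} (S : Matrix (Fin d) (Fin d) ℝ) (a : EuclideanSpace ℝ (Fin d)) : ℝ :=
  ∑ i, ∑ j, a i * S i j * a j

/-- The population adversarial risk of the linear model `f_θ(x) = θᵀx` under squared loss
and `L2` attacks of strength `ε`, for `x ~ N(0,Σ)` and `y = θ₀ᵀx + w`, `w ~ N(0,σ²)`:
`R_L(θ,ε) = ‖θ−θ₀‖²_Σ + σ² + ε²‖θ‖₂² + 2ε√(2/π)‖θ‖₂√(‖θ−θ₀‖²_Σ + σ²)`. -/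
def RL {d : ℕ} (S : Matrix (Fin d) (Fin d) ℝ) (θ0 : EuclideanSpace ℝ (Fin d))
    (σ ε : ℝ) (θ : EuclideanSpace ℝ (Fin d)) : ℝ :=
  quadForm S (θ - θ0) + σ ^ 2 + ε ^ 2 * ‖θ‖ ^ 2 +
    2 * ε * Real.sqrt (2 / Real.pi) * ‖θ‖ * Real.sqrt (quadForm S (θ - θ0) + σ ^ 2)

/-- The surrogate `L2` attack for the linear model `f_θ(x) = θᵀx` under squared loss
`l = (θᵀx − y)²`: the exact attack `A_ε(θ,x,y) = ε sgn(xᵀθ−y) θ/‖θ‖₂` rescaled by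
`‖∂l/∂x‖₂ / √(‖∂l/∂x‖₂² + ξ²)`, where `∂l/∂x = 2θ(xᵀθ−y)`. -/
def surrogateAttack {d : ℕ} (ε ξ : ℝ) (θ x : EuclideanSpace ℝ (Fin d)) (y : ℝ) :
    EuclideanSpace ℝ (Fin d) :=
  ((‖(2 * (⟪θ, x⟫ - y)) • θ‖ / Real.sqrt (‖(2 * (⟪θ, x⟫ - y)) • θ‖ ^ 2 + ξ ^ 2)) *
      (ε * Real.sign (⟪θ, x⟫ - y) / ‖θ‖)) • θ

namespace SparseAux

lemma sign_mul_abs (z : ℝ) : Real.sign z * |z| = z := by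
  rcases lt_trichotomy z 0 with h | h | h
  · rw [Real.sign_of_neg h, abs_of_neg h]; ring
  · simp [h]
  · rw [Real.sign_of_pos h, abs_of_pos h]; ring

/-- The scalar response after the attack. -/
def Fz (ε ξ t z : ℝ) : ℝ := z + 2*ε*t^2*z / Real.sqrt (4*t^2*z^2 + ξ^2)

/-- monotone ratio -/
lemma ratio_mono (ξ : ℝ) {A' A : ℝ} (h0 : 0 ≤ A') (h : A' ≤ A) :
    A' / Real.sqrt (A'^2 + ξ^2) ≤ A / Real.sqrt (A^2 + ξ^2) := by
  rcases eq_or_lt_of_le h0 with h0' | h0'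
  · simp only [← h0', zero_div]
    exact div_nonneg (h0.trans h) (Real.sqrt_nonneg _)
  · have hA : 0 < A := h0'.trans_le h
    have hd' : 0 < Real.sqrt (A'^2 + ξ^2) := by positivity
    have hd : 0 < Real.sqrt (A^2 + ξ^2) := by positivity
    rw [div_le_div_iff₀ hd' hd]
    have h1 : A' * Real.sqrt (A^2 + ξ^2) = Real.sqrt (A'^2 * (A^2 + ξ^2)) := by
      rw [Real.sqrt_mul (sq_nonneg _), Real.sqrt_sq h0]
    have h2 : A * Real.sqrt (A'^2 + ξ^2) = Real.sqrt (A^2 * (A'^2 + ξ^2)) := by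
      rw [Real.sqrt_mul (sq_nonneg _), Real.sqrt_sq hA.le]
    rw [h1, h2]
    apply Real.sqrt_le_sqrt
    nlinarith [mul_nonneg (sub_nonneg.mpr (mul_le_mul h h h0 hA.le)) (sq_nonneg ξ)]

lemma ratio_le_one (ξ : ℝ) {A : ℝ} (h0 : 0 ≤ A) : A / Real.sqrt (A^2 + ξ^2) ≤ 1 := by
  rcases eq_or_lt_of_le (Real.sqrt_nonneg (A^2 + ξ^2)) with hd | hd
  · rw [← hd]; simp
  · rw [div_le_one hd]
    calc A = Real.sqrt (A^2) := (Real.sqrt_sq h0).symm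
    _ ≤ Real.sqrt (A^2 + ξ^2) := Real.sqrt_le_sqrt (by nlinarith [sq_nonneg ξ])

/-- The `G` term. -/
def G (ε ξ t s : ℝ) : ℝ := ε * t * (2*t*s / Real.sqrt ((2*t*s)^2 + ξ^2))

lemma G_nonneg {ε ξ t s : ℝ} (hε : 0 ≤ ε) (ht : 0 ≤ t) (hs : 0 ≤ s) : 0 ≤ G ε ξ t s := by
  unfold G
  have : (0:ℝ) ≤ 2*t*s := by positivity
  positivity

lemma G_mono {ε ξ t t' s s' : ℝ} (hε : 0 ≤ ε) (ht0 : 0 ≤ t') (htt : t' ≤ t)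
    (hs0 : 0 ≤ s') (hss : s' ≤ s) : G ε ξ t' s' ≤ G ε ξ t s := by
  unfold G
  have h1 : (0:ℝ) ≤ 2*t'*s' := by positivity
  have h2 : 2*t'*s' ≤ 2*t*s := by nlinarith
  have h3 := ratio_mono ξ h1 h2
  have h4 : 0 ≤ 2*t'*s' / Real.sqrt ((2*t'*s')^2 + ξ^2) :=
    div_nonneg h1 (Real.sqrt_nonneg _)
  have h5 : ε * t' ≤ ε * t := by nlinarith
  have h6 : 0 ≤ ε * t' := by positivity
  nlinarith

lemma G_le {ε ξ t s : ℝ} (hε : 0 ≤ ε) (ht : 0 ≤ t) (hs : 0 ≤ s) : G ε ξ t s ≤ ε * t := by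
  unfold G
  have h1 : (0:ℝ) ≤ 2*t*s := by positivity
  have h2 := ratio_le_one ξ h1
  have h3 := div_nonneg h1 (Real.sqrt_nonneg ((2*t*s)^2 + ξ^2))
  nlinarith [mul_nonneg (mul_nonneg hε ht) (sub_nonneg.mpr h2)]

lemma Fz_sq (ε ξ t z : ℝ) : (Fz ε ξ t z)^2 = (|z| + G ε ξ t |z|)^2 := by
  have hc : 0 ≤ 2*ε*t^2 / Real.sqrt (4*t^2*z^2 + ξ^2) ∨ True := Or.inr trivial
  have h1 : Fz ε ξ t z = z * (1 + 2*ε*t^2 / Real.sqrt (4*t^2*z^2 + ξ^2)) := by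
    unfold Fz; ring
  have h2 : G ε ξ t |z| = |z| * (2*ε*t^2 / Real.sqrt (4*t^2*z^2 + ξ^2)) := by
    unfold G
    have habs : (2*t*|z|)^2 = 4*t^2*z^2 := by
      rw [mul_pow, mul_pow, sq_abs]; ring
    rw [habs]
    ring
  rw [h1, h2]
  have h3 : (z * (1 + 2*ε*t^2 / Real.sqrt (4*t^2*z^2 + ξ^2)))^2
      = z^2 * (1 + 2*ε*t^2 / Real.sqrt (4*t^2*z^2 + ξ^2))^2 := by ring
  rw [h3, ← sq_abs z]
  ring

lemma key_ineq {ε ξ t t' z z' : ℝ} (hε : 0 ≤ ε) (ht0 : 0 ≤ t') (htt : t' ≤ t)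
    (hz : |z'| ≤ |z|) :
    (Fz ε ξ t' z')^2 + (z^2 - z'^2) ≤ (Fz ε ξ t z)^2 := by
  rw [Fz_sq, Fz_sq]
  have hs0 : (0:ℝ) ≤ |z'| := abs_nonneg _
  have hG'0 : 0 ≤ G ε ξ t' |z'| := G_nonneg hε ht0 hs0
  have hGle : G ε ξ t' |z'| ≤ G ε ξ t |z| := G_mono hε ht0 htt hs0 hz
  have hz2 : z^2 = |z|^2 := (sq_abs z).symm
  have hz2' : z'^2 = |z'|^2 := (sq_abs z').symm
  rw [hz2, hz2']
  nlinarith [mul_le_mul hz hGle hG'0 (abs_nonneg z)]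

lemma Fz_sq_le {ε ξ t : ℝ} (hε : 0 ≤ ε) (ht : 0 ≤ t) (z : ℝ) :
    (Fz ε ξ t z)^2 ≤ 2*z^2 + 2*(ε*t)^2 := by
  rw [Fz_sq]
  have h1 : 0 ≤ G ε ξ t |z| := G_nonneg hε ht (abs_nonneg _)
  have h2 : G ε ξ t |z| ≤ ε*t := G_le hε ht (abs_nonneg _)
  have := sq_abs z
  nlinarith [abs_nonneg z, sq_nonneg (|z| - ε*t)]

lemma Fz_measurable (ε ξ t : ℝ) : Measurable (fun z => (Fz ε ξ t z)^2) := by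
  unfold Fz
  apply Measurable.pow_const
  apply Measurable.add measurable_id
  apply Measurable.div
  · exact (measurable_const.mul measurable_id)
  · exact (Real.continuous_sqrt.measurable).comp
      ((measurable_const.mul (measurable_id.pow_const 2)).add_const _)

lemma attack_term {d : ℕ} (ε ξ : ℝ) (θ : EuclideanSpace ℝ (Fin d)) (z : ℝ) :
    (‖(2*z) • θ‖ / Real.sqrt (‖(2*z) • θ‖ ^ 2 + ξ ^ 2) * (ε * Real.sign z / ‖θ‖)) * ‖θ‖ ^ 2
      = 2*ε*‖θ‖^2*z / Real.sqrt (4*‖θ‖^2*z^2 + ξ^2) := by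
  by_cases hθ : θ = 0
  · simp [hθ]
  by_cases hz : z = 0
  · simp [hz]
  have hn : (0:ℝ) < ‖θ‖ := norm_pos_iff.mpr hθ
  have hz2 : 0 < z^2 := lt_of_le_of_ne (sq_nonneg z) (Ne.symm (pow_ne_zero 2 hz))
  have hd : 0 < Real.sqrt (4*‖θ‖^2*z^2 + ξ^2) := by
    apply Real.sqrt_pos.mpr
    nlinarith [mul_pos (mul_pos (by norm_num : (0:ℝ) < 4) (pow_pos hn 2)) hz2, sq_nonneg ξ]
  rw [norm_smul, Real.norm_eq_abs, abs_mul, abs_two]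
  have hsqarg : (2 * |z| * ‖θ‖)^2 = 4*‖θ‖^2*z^2 := by
    rw [mul_pow, mul_pow, sq_abs]; ring
  rw [show ((2:ℝ) * |z| * ‖θ‖)^2 + ξ^2 = 4*‖θ‖^2*z^2 + ξ^2 by rw [hsqarg]]
  calc (2 * |z| * ‖θ‖ / Real.sqrt (4*‖θ‖^2*z^2 + ξ^2) * (ε * Real.sign z / ‖θ‖)) * ‖θ‖^2
      = (2*ε*‖θ‖^2) * (Real.sign z * |z|) * (‖θ‖/‖θ‖) / Real.sqrt (4*‖θ‖^2*z^2 + ξ^2) := by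
        ring
    _ = 2*ε*‖θ‖^2*z / Real.sqrt (4*‖θ‖^2*z^2 + ξ^2) := by
        rw [div_self (ne_of_gt hn), sign_mul_abs]; ring

lemma inner_attack {d : ℕ} (ε ξ : ℝ) (θ xv : EuclideanSpace ℝ (Fin d)) (yv : ℝ) :
    ⟪θ, xv + surrogateAttack ε ξ θ xv yv⟫ - yv = Fz ε ξ ‖θ‖ (⟪θ, xv⟫ - yv) := by
  rw [surrogateAttack, inner_add_right, real_inner_smul_right,
    real_inner_self_eq_norm_sq, attack_term]
  unfold Fz
  ring

lemma quadForm_eq_dot {d : ℕ} (S : Matrix (Fin d) (Fin d) ℝ) (a : EuclideanSpace ℝ (Fin d)) :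
    quadForm S a = dotProduct (a : Fin d → ℝ) (S.mulVec a) := by
  unfold quadForm dotProduct Matrix.mulVec
  simp only [dotProduct, Finset.mul_sum]
  exact Finset.sum_congr rfl fun i _ => Finset.sum_congr rfl fun j _ => by ring

lemma quadForm_pos {d : ℕ} {S : Matrix (Fin d) (Fin d) ℝ} (hS : S.PosDef)
    {a : EuclideanSpace ℝ (Fin d)} (ha : a ≠ 0) : 0 < quadForm S a := by
  rw [quadForm_eq_dot]
  have h := (posDef_iff_dotProduct_mulVec.mp hS).2 (x := (a : Fin d → ℝ)) (by
    intro h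
    apply ha
    ext i
    exact congrFun h i)
  simpa using h

lemma quadForm_nonneg {d : ℕ} {S : Matrix (Fin d) (Fin d) ℝ} (hS : S.PosDef)
    (a : EuclideanSpace ℝ (Fin d)) : 0 ≤ quadForm S a := by
  rcases eq_or_ne a 0 with h | h
  · subst h
    apply le_of_eq
    symm
    unfold quadForm
    apply Finset.sum_eq_zero
    intro i _
    apply Finset.sum_eq_zero
    intro j _
    show (0:EuclideanSpace ℝ (Fin d)) i * S i j * (0:EuclideanSpace ℝ (Fin d)) j = 0
    simp
  · exact (quadForm_pos hS h).le

lemma quadForm_split {d : ℕ} (S : Matrix (Fin d) (Fin d) ℝ) (Sset : Finset (Fin d))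
    (hblock : ∀ i j, ((i ∈ Sset ∧ j ∉ Sset) ∨ (i ∉ Sset ∧ j ∈ Sset)) → S i j = 0)
    (p q : EuclideanSpace ℝ (Fin d))
    (hp : ∀ i, i ∉ Sset → p i = 0) (hq : ∀ i, i ∈ Sset → q i = 0) :
    quadForm S (p + q) = quadForm S p + quadForm S q := by
  unfold quadForm
  rw [← Finset.sum_add_distrib]
  apply Finset.sum_congr rfl
  intro i _
  rw [← Finset.sum_add_distrib]
  apply Finset.sum_congr rfl
  intro j _
  have happ : ∀ k, (p + q) k = p k + q k := fun k => rfl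
  rw [happ, happ]
  have hcross1 : p i * S i j * q j = 0 := by
    by_cases hi : i ∈ Sset
    · by_cases hj : j ∈ Sset
      · rw [hq j hj]; ring
      · rw [hblock i j (Or.inl ⟨hi, hj⟩)]; ring
    · rw [hp i hi]; ring
  have hcross2 : q i * S i j * p j = 0 := by
    by_cases hi : i ∈ Sset
    · rw [hq i hi]; ring
    · by_cases hj : j ∈ Sset
      · rw [hblock i j (Or.inr ⟨hi, hj⟩)]; ring
      · rw [hp j hj]; ring
  nlinarith [hcross1, hcross2]

lemma pdf_conv_real (a b : ℝ≥0) (ha : a ≠ 0) (hb : b ≠ 0) (u x : ℝ) :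
    gaussianPDFReal 0 a x * gaussianPDFReal 0 b (u - x)
      = gaussianPDFReal 0 (a+b) u
        * gaussianPDFReal ((a:ℝ)*u/((a:ℝ)+(b:ℝ))) (a*b/(a+b)) x := by
  have ha' : (0:ℝ) < a := lt_of_le_of_ne a.coe_nonneg (by exact_mod_cast (Ne.symm ha))
  have hb' : (0:ℝ) < b := lt_of_le_of_ne b.coe_nonneg (by exact_mod_cast (Ne.symm hb))
  have hab : (0:ℝ) < (a:ℝ) + b := by linarith
  have hcoe : ((a*b/(a+b) : ℝ≥0) : ℝ) = (a:ℝ)*(b:ℝ)/((a:ℝ)+(b:ℝ)) := by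
    push_cast
    ring
  have hc' : (0:ℝ) < ((a*b/(a+b) : ℝ≥0) : ℝ) := by
    rw [hcoe]; positivity
  simp only [gaussianPDFReal_def, NNReal.coe_add, sub_zero]
  rw [hcoe]
  have hpi : (0:ℝ) < π := Real.pi_pos
  have hconst : (Real.sqrt (2*π*a))⁻¹ * (Real.sqrt (2*π*b))⁻¹
      = (Real.sqrt (2*π*((a:ℝ)+b)))⁻¹ * (Real.sqrt (2*π*((a:ℝ)*b/((a:ℝ)+b))))⁻¹ := by
    rw [← mul_inv, ← mul_inv, ← Real.sqrt_mul (by positivity), ← Real.sqrt_mul (by positivity)]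
    congr 1
    field_simp
  have hexp : -x^2/(2*(a:ℝ)) + -(u-x)^2/(2*(b:ℝ))
      = -u^2/(2*((a:ℝ)+b)) + -(x - (a:ℝ)*u/((a:ℝ)+b))^2/(2*((a:ℝ)*b/((a:ℝ)+b))) := by
    field_simp
    ring
  calc (Real.sqrt (2*π*a))⁻¹ * rexp (-x^2/(2*(a:ℝ)))
        * ((Real.sqrt (2*π*b))⁻¹ * rexp (-(u-x)^2/(2*(b:ℝ))))
      = ((Real.sqrt (2*π*a))⁻¹ * (Real.sqrt (2*π*b))⁻¹)
        * rexp (-x^2/(2*(a:ℝ)) + -(u-x)^2/(2*(b:ℝ))) := by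
        rw [Real.exp_add]; ring
    _ = ((Real.sqrt (2*π*((a:ℝ)+b)))⁻¹ * (Real.sqrt (2*π*((a:ℝ)*b/((a:ℝ)+b))))⁻¹)
        * rexp (-u^2/(2*((a:ℝ)+b)) + -(x - (a:ℝ)*u/((a:ℝ)+b))^2/(2*((a:ℝ)*b/((a:ℝ)+b)))) := by
        rw [hconst, hexp]
    _ = _ := by rw [Real.exp_add]; ring

lemma pdf_conv (a b : ℝ≥0) (ha : a ≠ 0) (hb : b ≠ 0) (u : ℝ) :
    ∫⁻ x, gaussianPDF 0 a x * gaussianPDF 0 b (u - x) = gaussianPDF 0 (a+b) u := by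
  have hcne : (a*b/(a+b) : ℝ≥0) ≠ 0 := by
    have : a + b ≠ 0 := by
      simp only [ne_eq, add_eq_zero]
      tauto
    positivity
  have key : ∀ x, gaussianPDF 0 a x * gaussianPDF 0 b (u - x)
      = gaussianPDF 0 (a+b) u
        * gaussianPDF ((a:ℝ)*u/((a:ℝ)+(b:ℝ))) (a*b/(a+b)) x := by
    intro x
    unfold gaussianPDF
    rw [← ENNReal.ofReal_mul (gaussianPDFReal_nonneg _ _ _),
      ← ENNReal.ofReal_mul (gaussianPDFReal_nonneg _ _ _), pdf_conv_real a b ha hb]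
  simp_rw [key]
  rw [lintegral_const_mul _ (measurable_gaussianPDF _ _), lintegral_gaussianPDF_eq_one _ hcne,
    mul_one]

lemma map_add_prod_gaussian (a b : ℝ≥0) (ha : a ≠ 0) (hb : b ≠ 0) :
    Measure.map (fun p : ℝ × ℝ => p.1 + p.2)
      ((gaussianReal 0 a).prod (gaussianReal 0 b)) = gaussianReal 0 (a+b) := by
  have hab : a + b ≠ 0 := by simp only [ne_eq, add_eq_zero]; tauto
  have hmeas_add : Measurable (fun p : ℝ × ℝ => p.1 + p.2) := measurable_fst.add measurable_snd
  set pa := gaussianPDF 0 a with hpa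
  set pb := gaussianPDF 0 b with hpb
  set pab := gaussianPDF 0 (a+b) with hpab
  ext s hs
  rw [Measure.map_apply hmeas_add hs,
    gaussianReal_of_var_ne_zero _ ha, gaussianReal_of_var_ne_zero _ hb,
    gaussianReal_of_var_ne_zero _ hab, withDensity_apply _ hs,
    Measure.prod_apply (hmeas_add hs)]
  -- evaluate the slice measure
  have hslice : ∀ x : ℝ, (volume.withDensity pb) (Prod.mk x ⁻¹' ((fun p : ℝ × ℝ => p.1 + p.2) ⁻¹' s))
      = ∫⁻ u, Set.indicator s (fun _ => (1:ℝ≥0∞)) u * pb (u - x) ∂volume := by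
    intro x
    have hset : (Prod.mk x ⁻¹' ((fun p : ℝ × ℝ => p.1 + p.2) ⁻¹' s)) = (fun y => x + y) ⁻¹' s := rfl
    have hmset : MeasurableSet ((fun y => x + y) ⁻¹' s) := (measurable_id.const_add x) hs
    rw [hset, withDensity_apply _ hmset, ← lintegral_indicator hmset]
    have hptw : ∀ y : ℝ, ((fun y => x + y) ⁻¹' s).indicator pb y
        = (fun u => Set.indicator s (fun _ => (1:ℝ≥0∞)) u * pb (u - x)) (y + x) := by
      intro y
      by_cases hy : x + y ∈ s
      · have hy' : y + x ∈ s := by rwa [add_comm]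
        simp [Set.indicator_of_mem, hy, hy', Set.mem_preimage]
      · have hy' : y + x ∉ s := by rwa [add_comm]
        simp [Set.indicator_of_notMem, hy, hy', Set.mem_preimage]
    rw [lintegral_congr hptw, lintegral_add_right_eq_self
      (fun u => Set.indicator s (fun _ => (1:ℝ≥0∞)) u * pb (u - x)) x]
  rw [lintegral_congr hslice]
  have hpbm : Measurable pb := measurable_gaussianPDF 0 b
  have hpam : Measurable pa := measurable_gaussianPDF 0 a
  have hind : Measurable (fun u => Set.indicator s (fun _ => (1:ℝ≥0∞)) u) :=
    measurable_const.indicator hs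
  -- withDensity on the outer integral
  rw [lintegral_withDensity_eq_lintegral_mul _ hpam]
  swap
  · apply Measurable.lintegral_prod_right (f := fun x u => Set.indicator s (fun _ => (1:ℝ≥0∞)) u * pb (u - x))
    exact (hind.comp measurable_snd).mul (hpbm.comp (measurable_snd.sub measurable_fst))
  have hmul : ∀ x : ℝ, (pa * fun x => ∫⁻ u, Set.indicator s (fun _ => (1:ℝ≥0∞)) u * pb (u - x) ∂volume) x
      = ∫⁻ u, Set.indicator s (fun _ => (1:ℝ≥0∞)) u * (pa x * pb (u - x)) ∂volume := by
    intro x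
    simp only [Pi.mul_apply]
    have hfm : Measurable (fun u : ℝ => Set.indicator s (fun _ => (1:ℝ≥0∞)) u * pb (u - x)) :=
      hind.mul (hpbm.comp (measurable_id.sub_const x))
    rw [← lintegral_const_mul _ hfm]
    congr 1
    ext u
    ring
  rw [lintegral_congr hmul]
  rw [lintegral_lintegral_swap]
  swap
  · apply Measurable.aemeasurable
    exact ((hind.comp measurable_snd).mul
      ((hpam.comp measurable_fst).mul (hpbm.comp (measurable_snd.sub measurable_fst))))
  have hfinal : ∀ u : ℝ, (∫⁻ x, Set.indicator s (fun _ => (1:ℝ≥0∞)) u * (pa x * pb (u - x)) ∂volume)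
      = s.indicator pab u := by
    intro u
    have hgm : Measurable (fun x : ℝ => pa x * pb (u - x)) :=
      hpam.mul (hpbm.comp (measurable_const.sub measurable_id))
    rw [lintegral_const_mul _ hgm, pdf_conv a b ha hb u]
    by_cases hu : u ∈ s
    · simp [Set.indicator_of_mem hu, hpab]
    · simp [Set.indicator_of_notMem hu, hpab]
  rw [lintegral_congr hfinal, lintegral_indicator hs]

lemma ae_zero_of_map_dirac {Ω : Type} [MeasurableSpace Ω] {μ : Measure Ω}
    {X : Ω → ℝ} (hXm : Measurable X) (h : Measure.map X μ = Measure.dirac 0) :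
    ∀ᵐ ω ∂μ, X ω = 0 := by
  have hset : MeasurableSet ({(0:ℝ)}ᶜ) := (measurableSet_singleton 0).compl
  have h0 : μ (X ⁻¹' {(0:ℝ)}ᶜ) = 0 := by
    rw [← Measure.map_apply hXm hset, h, Measure.dirac_apply' _ hset]
    simp
  rw [ae_iff]
  convert h0 using 2
  ext ω; simp

lemma gaussian_sum {Ω : Type} [MeasurableSpace Ω] (μ : Measure Ω) [IsProbabilityMeasure μ]
    {X Y : Ω → ℝ} (hXm : Measurable X) (hYm : Measurable Y) (hind : IndepFun X Y μ)
    {a b : ℝ≥0} (hX : Measure.map X μ = gaussianReal 0 a)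
    (hY : Measure.map Y μ = gaussianReal 0 b) :
    Measure.map (fun ω => X ω + Y ω) μ = gaussianReal 0 (a+b) := by
  by_cases ha : a = 0
  · subst ha
    rw [gaussianReal_zero_var] at hX
    have hae := ae_zero_of_map_dirac hXm hX
    have : (fun ω => X ω + Y ω) =ᵐ[μ] Y := by
      filter_upwards [hae] with ω hω
      rw [hω, zero_add]
    rw [Measure.map_congr this, hY, zero_add]
  by_cases hb : b = 0
  · subst hb
    rw [gaussianReal_zero_var] at hY
    have hae := ae_zero_of_map_dirac hYm hY
    have : (fun ω => X ω + Y ω) =ᵐ[μ] X := by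
      filter_upwards [hae] with ω hω
      rw [hω, add_zero]
    rw [Measure.map_congr this, hX, add_zero]
  have hpair : Measure.map (fun ω => (X ω, Y ω)) μ = (Measure.map X μ).prod (Measure.map Y μ) :=
    (indepFun_iff_map_prod_eq_prod_map_map hXm.aemeasurable hYm.aemeasurable).mp hind
  have hcomp : (fun ω => X ω + Y ω) = (fun p : ℝ × ℝ => p.1 + p.2) ∘ (fun ω => (X ω, Y ω)) := rfl
  rw [hcomp, ← Measure.map_map (g := fun p : ℝ × ℝ => p.1 + p.2) (measurable_fst.add measurable_snd) (hXm.prodMk hYm), hpair,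
    hX, hY, map_add_prod_gaussian a b ha hb]

lemma int_sq_gauss : Integrable (fun u : ℝ => u^2) (gaussianReal 0 1) := by
  rw [gaussianReal_of_var_ne_zero _ one_ne_zero]
  rw [integrable_withDensity_iff (measurable_gaussianPDF _ _)
    (Filter.Eventually.of_forall fun x => ENNReal.ofReal_lt_top)]
  have h := (integrable_rpow_mul_exp_neg_mul_sq (by norm_num : (0:ℝ) < 1/2)
    (by norm_num : (-1:ℝ) < 2)).const_mul ((Real.sqrt (2*π))⁻¹)
  have hr : ∀ x : ℝ, x ^ (2:ℝ) = x ^ (2:ℕ) := by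
    intro x
    rw [← Real.rpow_natCast x 2]; norm_num
  simp_rw [hr] at h
  apply h.congr
  apply Filter.Eventually.of_forall
  intro x
  show (√(2 * π))⁻¹ * (x ^ 2 * rexp (-(1 / 2) * x ^ 2)) = x ^ 2 * (gaussianPDF 0 1 x).toReal
  unfold gaussianPDF
  rw [ENNReal.toReal_ofReal (gaussianPDFReal_nonneg _ _ _), gaussianPDFReal_def]
  simp only [NNReal.coe_one, mul_one, sub_zero]
  rw [show (-(1/2:ℝ) * x^2) = -x^2/2 from by ring]
  ring

lemma pos_int_sq : 0 < ∫ u, u^2 ∂(gaussianReal 0 1) := by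
  rw [integral_pos_iff_support_of_nonneg (fun u => sq_nonneg u) int_sq_gauss]
  have hsupp : Function.support (fun u : ℝ => u^2) = {(0:ℝ)}ᶜ := by
    ext u
    simp [Function.mem_support, pow_eq_zero_iff]
  rw [hsupp]
  have h0 : (gaussianReal 0 1) {(0:ℝ)} = 0 := by
    rw [gaussianReal_of_var_ne_zero _ one_ne_zero, withDensity_apply _ (measurableSet_singleton 0)]
    rw [setLIntegral_measure_zero _ _ (Real.volume_singleton)]
  have := measure_compl (μ := gaussianReal 0 1) (measurableSet_singleton (0:ℝ)) (by simp [h0])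
  rw [this, h0]
  simp

end SparseAux

/-- If `Σ` is block diagonal with respect to a set `S` of coordinates
(`Σᵢⱼ = 0` whenever exactly one of `i, j` lies in `S`) and `θ₀` is supported on `S`, then every
global minimizer `θ*` of the surrogate population adversarial risk `R_{L,ξ}(·,ε)` is also
supported on `S`. -/
theorem surrogate_minimizer_sparsity_preserved
    {d : ℕ} (hd : 1 ≤ d) (S : Matrix (Fin d) (Fin d) ℝ) (hS : S.PosDef)
    (θ0 : EuclideanSpace ℝ (Fin d)) (σ ε ξ : ℝ) (hσ : 0 < σ) (hε : 0 < ε) (hξ : 0 ≤ ξ)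
    (Sset : Finset (Fin d))
    (hblock : ∀ i j, ((i ∈ Sset ∧ j ∉ Sset) ∨ (i ∉ Sset ∧ j ∈ Sset)) → S i j = 0)
    (hsupp : ∀ j, j ∉ Sset → θ0 j = 0)
    {Ω : Type} [MeasurableSpace Ω] (μ : Measure Ω) [IsProbabilityMeasure μ]
    (x : Ω → EuclideanSpace ℝ (Fin d)) (w : Ω → ℝ)
    (hxm : Measurable x) (hwm : Measurable w)
    (hx : ∀ u : EuclideanSpace ℝ (Fin d),
      Measure.map (fun ω => ⟪u, x ω⟫) μ = gaussianReal 0 (Real.toNNReal (quadForm S u)))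
    (hw : Measure.map w μ = gaussianReal 0 (Real.toNNReal (σ ^ 2)))
    (hindep : IndepFun x w μ)
    (y : Ω → ℝ) (hy : ∀ ω, y ω = ⟪θ0, x ω⟫ + w ω)
    (Rxi : EuclideanSpace ℝ (Fin d) → ℝ)
    (hRxi : ∀ θ, Rxi θ =
      ∫ ω, (⟪θ, x ω + surrogateAttack ε ξ θ (x ω) (y ω)⟫ - y ω) ^ 2 ∂μ)
    (θs : EuclideanSpace ℝ (Fin d))
    (hmin : ∀ θ : EuclideanSpace ℝ (Fin d), Rxi θs ≤ Rxi θ) :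
    ∀ j, j ∉ Sset → θs j = 0 := by
  classical
  open SparseAux in
  by_contra hcon
  push_neg at hcon
  obtain ⟨j, hj, hθj⟩ := hcon
  -- the projected vector
  set θ' : EuclideanSpace ℝ (Fin d) := WithLp.toLp 2 (fun i => if i ∈ Sset then θs i else 0) with hθ'def
  have happly : ∀ (p q : EuclideanSpace ℝ (Fin d)) (i : Fin d), (p - q) i = p i - q i :=
    fun _ _ _ => rfl
  set bvec : EuclideanSpace ℝ (Fin d) := θs - θ' with hbdef
  have hbcoord : ∀ i, bvec i = if i ∈ Sset then 0 else θs i := by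
    intro i
    rw [hbdef, happly, hθ'def]
    by_cases hi : i ∈ Sset <;> simp [hi]
  have hbne : bvec ≠ 0 := by
    intro h
    apply hθj
    have : bvec j = 0 := by rw [h]; rfl
    rwa [hbcoord j, if_neg hj] at this
  have hqb : 0 < quadForm S bvec := quadForm_pos hS hbne
  -- quadratic form split
  have hsplit : quadForm S (θs - θ0) = quadForm S (θ' - θ0) + quadForm S bvec := by
    have hsum : θs - θ0 = (θ' - θ0) + bvec := by
      rw [hbdef]; abel
    rw [hsum]
    apply quadForm_split S Sset hblock
    · intro i hi
      rw [happly, hθ'def]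
      simp [if_neg hi, hsupp i hi]
    · intro i hi
      rw [hbcoord i, if_pos hi]
  -- norms
  have htle : ‖θ'‖ ≤ ‖θs‖ := by
    rw [EuclideanSpace.norm_eq, EuclideanSpace.norm_eq]
    apply Real.sqrt_le_sqrt
    apply Finset.sum_le_sum
    intro i _
    rw [hθ'def]
    by_cases hi : i ∈ Sset <;> simp [hi]
    exact sq_nonneg _
  -- variances
  set q' : ℝ := quadForm S (θ' - θ0) with hq'def
  set qs : ℝ := quadForm S (θs - θ0) with hqsdef
  have hq'0 : 0 ≤ q' := quadForm_nonneg hS _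
  have hqs0 : 0 ≤ qs := quadForm_nonneg hS _
  set v' : ℝ := q' + σ^2 with hv'def
  set v : ℝ := qs + σ^2 with hvdef
  have hv'pos : 0 < v' := by positivity
  have hvpos : 0 < v := by positivity
  have hvv : v' < v := by
    rw [hv'def, hvdef, hsplit]
    linarith [hqb]
  -- representation of the risk
  have hrep : ∀ θ : EuclideanSpace ℝ (Fin d),
      Rxi θ = ∫ u, (Fz ε ξ ‖θ‖ (Real.sqrt (quadForm S (θ - θ0) + σ^2) * u))^2
        ∂(gaussianReal 0 1) := by
    intro θ
    set qθ : ℝ := quadForm S (θ - θ0) with hqθ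
    have hqθ0 : 0 ≤ qθ := quadForm_nonneg hS _
    have hvθpos : 0 < qθ + σ^2 := by positivity
    set Z : Ω → ℝ := fun ω => ⟪θ - θ0, x ω⟫ + (-(w ω)) with hZ
    have hinner_meas : Measurable (fun ω => ⟪θ - θ0, x ω⟫) :=
      ((continuous_const.inner continuous_id).measurable).comp hxm
    have hZm : Measurable Z := hinner_meas.add hwm.neg
    -- law of Z
    have hXlaw : Measure.map (fun ω => ⟪θ - θ0, x ω⟫) μ
        = gaussianReal 0 (Real.toNNReal qθ) := hx (θ - θ0)
    have hYlaw : Measure.map (fun ω => -(w ω)) μ = gaussianReal 0 (Real.toNNReal (σ^2)) := by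
      have hcomp : (fun ω => -(w ω)) = (fun z : ℝ => (-1) * z) ∘ w := by
        funext ω; simp
      have hgm : Measurable (fun z : ℝ => (-1:ℝ) * z) := measurable_id.const_mul (-1)
      rw [hcomp, ← Measure.map_map hgm hwm, hw]
      have := gaussianReal_map_const_mul (μ := 0) (v := Real.toNNReal (σ^2)) (-1)
      rw [show ((fun z : ℝ => (-1) * z) = fun z : ℝ => (-1) * z) from rfl]
      rw [show (Measure.map (fun z : ℝ => (-1) * z) (gaussianReal 0 (Real.toNNReal (σ^2))))
          = Measure.map ((-1 : ℝ) * ·) (gaussianReal 0 (Real.toNNReal (σ^2))) from rfl]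
      rw [this]
      have h1 : (NNReal.mk ((-1:ℝ)^2) (sq_nonneg _)) = 1 := by
        ext; norm_num
      rw [h1, one_mul]
      norm_num
    have hindZ : IndepFun (fun ω => ⟪θ - θ0, x ω⟫) (fun ω => -(w ω)) μ := by
      have := hindep.comp (φ := fun v : EuclideanSpace ℝ (Fin d) => ⟪θ - θ0, v⟫)
        (ψ := fun r : ℝ => -r)
        ((continuous_const.inner continuous_id).measurable) measurable_neg
      exact this
    have hZlaw : Measure.map Z μ
        = gaussianReal 0 (Real.toNNReal qθ + Real.toNNReal (σ^2)) :=
      gaussian_sum μ hinner_meas hwm.neg hindZ hXlaw hYlaw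
    have hvar : Real.toNNReal qθ + Real.toNNReal (σ^2) = Real.toNNReal (qθ + σ^2) :=
      (Real.toNNReal_add hqθ0 (sq_nonneg σ)).symm
    rw [hvar] at hZlaw
    -- rewrite the integrand
    have hptw : ∀ ω, (⟪θ, x ω + surrogateAttack ε ξ θ (x ω) (y ω)⟫ - y ω)^2
        = (Fz ε ξ ‖θ‖ (Z ω))^2 := by
      intro ω
      have hZω : Z ω = ⟪θ - θ0, x ω⟫ + (-(w ω)) := rfl
      have harg : ⟪θ, x ω⟫ - y ω = Z ω := by
        rw [hy ω, hZω, inner_sub_left]; ring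
      rw [inner_attack, harg]
    rw [hRxi θ]
    calc ∫ ω, (⟪θ, x ω + surrogateAttack ε ξ θ (x ω) (y ω)⟫ - y ω)^2 ∂μ
        = ∫ ω, (Fz ε ξ ‖θ‖ (Z ω))^2 ∂μ := by
          exact integral_congr_ae (Filter.Eventually.of_forall hptw)
      _ = ∫ z, (Fz ε ξ ‖θ‖ z)^2 ∂(Measure.map Z μ) := by
          rw [integral_map hZm.aemeasurable ((Fz_measurable ε ξ ‖θ‖).aestronglyMeasurable)]
      _ = ∫ z, (Fz ε ξ ‖θ‖ z)^2 ∂(gaussianReal 0 (Real.toNNReal (qθ + σ^2))) := by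
          rw [hZlaw]
      _ = ∫ u, (Fz ε ξ ‖θ‖ (Real.sqrt (qθ + σ^2) * u))^2 ∂(gaussianReal 0 1) := by
          have hscale : Measure.map ((Real.sqrt (qθ + σ^2)) * ·) (gaussianReal 0 1)
              = gaussianReal 0 (Real.toNNReal (qθ + σ^2)) := by
            rw [gaussianReal_map_const_mul]
            have h2 : (NNReal.mk ((Real.sqrt (qθ + σ^2))^2) (sq_nonneg _)) * 1
                = Real.toNNReal (qθ + σ^2) := by
              ext
              simp [Real.sq_sqrt hvθpos.le, Real.coe_toNNReal _ hvθpos.le]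
            rw [h2]
            norm_num
          have hφm : Measurable (fun u : ℝ => Real.sqrt (qθ + σ^2) * u) :=
            measurable_id.const_mul _
          rw [← hscale, integral_map hφm.aemeasurable
            ((Fz_measurable ε ξ ‖θ‖).aestronglyMeasurable)]
  -- integrability
  have hFz_int : ∀ (t c : ℝ), 0 ≤ t →
      Integrable (fun u => (Fz ε ξ t (c * u))^2) (gaussianReal 0 1) := by
    intro t c ht
    have hbound : Integrable (fun u : ℝ => 2*c^2*u^2 + 2*(ε*t)^2) (gaussianReal 0 1) :=
      (int_sq_gauss.const_mul (2*c^2)).add (integrable_const _)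
    apply hbound.mono
    · exact ((Fz_measurable ε ξ t).comp (measurable_id.const_mul c)).aestronglyMeasurable
    · apply Filter.Eventually.of_forall
      intro u
      have h1 : (Fz ε ξ t (c*u))^2 ≤ 2*(c*u)^2 + 2*(ε*t)^2 := Fz_sq_le hε.le ht (c*u)
      have h2 : (0:ℝ) ≤ 2*c^2*u^2 + 2*(ε*t)^2 := by positivity
      rw [Real.norm_eq_abs, Real.norm_eq_abs, abs_of_nonneg (sq_nonneg _), abs_of_nonneg h2]
      nlinarith [h1]
  have I1 : Integrable (fun u => (Fz ε ξ ‖θ'‖ (Real.sqrt v' * u))^2) (gaussianReal 0 1) :=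
    hFz_int ‖θ'‖ (Real.sqrt v') (norm_nonneg _)
  have I2 : Integrable (fun u => (Fz ε ξ ‖θs‖ (Real.sqrt v * u))^2) (gaussianReal 0 1) :=
    hFz_int ‖θs‖ (Real.sqrt v) (norm_nonneg _)
  have I3 : Integrable (fun u : ℝ => (v - v')*u^2) (gaussianReal 0 1) :=
    int_sq_gauss.const_mul (v - v')
  -- pointwise inequality
  have hptwise : ∀ u : ℝ, (Fz ε ξ ‖θ'‖ (Real.sqrt v' * u))^2 + (v - v')*u^2
      ≤ (Fz ε ξ ‖θs‖ (Real.sqrt v * u))^2 := by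
    intro u
    have habs : |Real.sqrt v' * u| ≤ |Real.sqrt v * u| := by
      rw [abs_mul, abs_mul, abs_of_nonneg (Real.sqrt_nonneg _), abs_of_nonneg (Real.sqrt_nonneg _)]
      exact mul_le_mul_of_nonneg_right (Real.sqrt_le_sqrt hvv.le) (abs_nonneg u)
    have hk := key_ineq (ε := ε) (ξ := ξ) hε.le (norm_nonneg θ') htle habs
    have hz2 : (Real.sqrt v * u)^2 - (Real.sqrt v' * u)^2 = (v - v')*u^2 := by
      rw [mul_pow, mul_pow, Real.sq_sqrt hvpos.le, Real.sq_sqrt hv'pos.le]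
      ring
    linarith [hk, hz2.symm.le, hz2.le]
  -- integrate
  have hint : Rxi θ' + (v - v') * ∫ u, u^2 ∂(gaussianReal 0 1) ≤ Rxi θs := by
    rw [hrep θ', hrep θs, ← hq'def, ← hqsdef, ← hv'def, ← hvdef]
    rw [← MeasureTheory.integral_const_mul, ← MeasureTheory.integral_add I1 I3]
    exact integral_mono (I1.add I3) I2 hptwise
  have hfin := hmin θ'
  nlinarith [pos_int_sq, hint, hfin, mul_pos (sub_pos.mpr hvv) pos_int_sq]


end
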